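/- Let (S_n) be a stationary Markov chain on a finite alphabet with transition matrix Q having all positive entries, and let X and Y be two length-ℓ windows of the chain with no physical overlap (in particular, jointly they factor through a common conditioning separating them). Then P(X = Y) ≤ γ ρ^ℓ where ρ = ρ_max(Q̄), Q̄ = (q_{ij}²), and γ is the Perron constant max_i(‖π‖_1/(π_i ρ)) for the Perron eigenvector π of Q̄. -/
import Mathlib


open Finset

lemma mdw_sum_snoc {n : ℕ} (F : (Fin (n+1) → Fin 4) → ℝ) :
    ∑ s : Fin (n+1) → Fin 4, F s
      = ∑ s : Fin n → Fin 4, ∑ x : Fin 4, F (Fin.snoc s x) := by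
  rw [← (Fin.snocEquiv (fun _ => Fin 4)).sum_comp F]
  rw [Fintype.sum_prod_type_right]
  rfl

lemma mdw_sum_cons {n : ℕ} (F : (Fin (n+1) → Fin 4) → ℝ) :
    ∑ s : Fin (n+1) → Fin 4, F s
      = ∑ s : Fin n → Fin 4, ∑ x : Fin 4, F (Fin.cons x s) := by
  rw [← (Fin.consEquiv (fun _ => Fin 4)).sum_comp F]
  rw [Fintype.sum_prod_type_right]
  rfl

lemma mdw_snoc_mk {n : ℕ} (s : Fin n → Fin 4) (x : Fin 4) (v : ℕ) (hv : v < n)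
    (hv' : v < n + 1) : (Fin.snoc s x : Fin (n+1) → Fin 4) ⟨v, hv'⟩ = s ⟨v, hv⟩ := by
  have h : (⟨v, hv'⟩ : Fin (n+1)) = Fin.castSucc ⟨v, hv⟩ := rfl
  rw [h, Fin.snoc_castSucc]

lemma mdw_snoc_last' {n : ℕ} (s : Fin n → Fin 4) (x : Fin 4) (hv' : n < n + 1) :
    (Fin.snoc s x : Fin (n+1) → Fin 4) ⟨n, hv'⟩ = x := by
  have h : (⟨n, hv'⟩ : Fin (n+1)) = Fin.last n := rfl
  rw [h, Fin.snoc_last]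

/-- Weight of a trajectory. -/
def mdwW (Q : Matrix (Fin 4) (Fin 4) ℝ) (p : Fin 4 → ℝ) (n : ℕ) (s : Fin (n+1) → Fin 4) : ℝ :=
  p (s 0) * ∏ t : Fin n, Q (s t.succ) (s t.castSucc)

lemma mdw_W_snoc (Q : Matrix (Fin 4) (Fin 4) ℝ) (p : Fin 4 → ℝ) (n : ℕ)
    (s : Fin (n+1) → Fin 4) (x : Fin 4) :
    mdwW Q p (n+1) (Fin.snoc s x) = mdwW Q p n s * Q x (s (Fin.last n)) := by
  simp only [mdwW, Fin.prod_univ_castSucc, Fin.succ_castSucc, Fin.snoc_castSucc,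
    Fin.succ_last, Fin.snoc_last, Fin.castSucc_zero']
  have h0 : (Fin.snoc s x : Fin (n+2) → Fin 4) 0 = s 0 := by
    have : (0 : Fin (n+2)) = Fin.castSucc 0 := rfl
    rw [this, Fin.snoc_castSucc]
  rw [h0]
  have h1 : ∀ j : Fin (n+1), (Fin.castSucc j).castSucc = Fin.castSucc (Fin.castSucc j) := by
    intro j; rfl
  ring

lemma mdw_W_cons (Q : Matrix (Fin 4) (Fin 4) ℝ) (p : Fin 4 → ℝ) (n : ℕ)
    (s : Fin (n+1) → Fin 4) (x : Fin 4) :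
    mdwW Q p (n+1) (Fin.cons x s)
      = (p x * Q (s 0) x) * ∏ t : Fin n, Q (s t.succ) (s t.castSucc) := by
  simp only [mdwW, Fin.prod_univ_succ, Fin.cons_zero, Fin.cons_succ, ← Fin.succ_castSucc,
    Fin.castSucc_zero']
  ring

lemma mdw_dropLast (Q : Matrix (Fin 4) (Fin 4) ℝ) (hcol : ∀ j, ∑ i, Q i j = 1)
    (p : Fin 4 → ℝ) (n : ℕ) (f : (Fin (n+1) → Fin 4) → ℝ) :
    ∑ s : Fin (n+2) → Fin 4, mdwW Q p (n+1) s * f (Fin.init s)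
      = ∑ s : Fin (n+1) → Fin 4, mdwW Q p n s * f s := by
  rw [mdw_sum_snoc]
  refine Finset.sum_congr rfl fun s _ => ?_
  simp only [mdw_W_snoc, Fin.init_snoc]
  rw [← Finset.sum_mul, ← Finset.mul_sum, hcol (s (Fin.last n))]
  ring

lemma mdw_dropFirst (Q : Matrix (Fin 4) (Fin 4) ℝ)
    (p : Fin 4 → ℝ) (hstat : ∀ i, ∑ j, Q i j * p j = p i) (n : ℕ)
    (f : (Fin (n+1) → Fin 4) → ℝ) :
    ∑ s : Fin (n+2) → Fin 4, mdwW Q p (n+1) s * f (fun i => s i.succ)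
      = ∑ s : Fin (n+1) → Fin 4, mdwW Q p n s * f s := by
  rw [mdw_sum_cons]
  refine Finset.sum_congr rfl fun s _ => ?_
  have htail : ∀ x : Fin 4, (fun i : Fin (n+1) => (Fin.cons x s : Fin (n+2) → Fin 4) i.succ) = s := by
    intro x; funext i; rw [Fin.cons_succ]
  have : ∀ x : Fin 4, mdwW Q p (n+1) (Fin.cons x s) * f (fun i => (Fin.cons x s : Fin (n+2) → Fin 4) i.succ)
      = (Q (s 0) x * p x) * ((∏ t : Fin n, Q (s t.succ) (s t.castSucc)) * f s) := by
    intro x; rw [htail, mdw_W_cons]; ring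
  rw [Finset.sum_congr rfl (fun x _ => this x), ← Finset.sum_mul, hstat (s 0)]
  rw [mdwW]; ring

lemma mdw_dropTail (Q : Matrix (Fin 4) (Fin 4) ℝ) (hcol : ∀ j, ∑ i, Q i j = 1)
    (p : Fin 4 → ℝ) (k : ℕ) (f : (Fin (k+1) → Fin 4) → ℝ) :
    ∀ n (h : k ≤ n),
    ∑ s : Fin (n+1) → Fin 4,
        mdwW Q p n s * f (fun i : Fin (k+1) => s (Fin.castLE (Nat.succ_le_succ h) i))
      = ∑ s : Fin (k+1) → Fin 4, mdwW Q p k s * f s := by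
  intro n h
  induction n, h using Nat.le_induction with
  | base =>
    refine Finset.sum_congr rfl fun s _ => ?_
    have hr : (fun i : Fin (k+1) => s (Fin.castLE (Nat.succ_le_succ le_rfl) i)) = s :=
      funext fun i => congrArg s (Fin.ext rfl)
    rw [hr]
  | succ n h ih =>
    have key := mdw_dropLast Q hcol p n
      (fun s' : Fin (n+1) → Fin 4 => f (fun i : Fin (k+1) => s' (Fin.castLE (Nat.succ_le_succ h) i)))
    rw [← ih]
    rw [← key]
    refine Finset.sum_congr rfl fun s _ => ?_
    have hr : (fun i : Fin (k+1) => s (Fin.castLE (Nat.succ_le_succ (h.trans (Nat.le_succ n))) i))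
        = (fun i : Fin (k+1) => Fin.init s (Fin.castLE (Nat.succ_le_succ h) i)) :=
      funext fun i => congrArg s (Fin.ext rfl)
    rw [hr]

lemma mdw_dropHead (Q : Matrix (Fin 4) (Fin 4) ℝ)
    (p : Fin 4 → ℝ) (hstat : ∀ i, ∑ j, Q i j * p j = p i) (n : ℕ)
    (f : (Fin (n+1) → Fin 4) → ℝ) :
    ∀ a : ℕ,
    ∑ s : Fin (n+a+1) → Fin 4,
        mdwW Q p (n+a) s * f (fun i : Fin (n+1) => s ⟨a + i.1, by have := i.isLt; omega⟩)
      = ∑ s : Fin (n+1) → Fin 4, mdwW Q p n s * f s := by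
  intro a
  induction a with
  | zero =>
    refine Finset.sum_congr rfl fun s _ => ?_
    have hr : (fun i : Fin (n+1) => s ⟨0 + i.1, by have := i.isLt; omega⟩) = s :=
      funext fun i => congrArg s (Fin.ext (Nat.zero_add _))
    rw [hr]
    rfl
  | succ a ih =>
    have key := mdw_dropFirst Q p hstat (n+a)
      (fun s' : Fin (n+a+1) → Fin 4 =>
        f (fun i : Fin (n+1) => s' ⟨a + i.1, by have := i.isLt; omega⟩))
    rw [← ih, ← key]
    refine Finset.sum_congr rfl fun s _ => ?_
    have hr : (fun i : Fin (n+1) => s ⟨a + 1 + i.1, by have := i.isLt; omega⟩)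
        = (fun i : Fin (n+1) =>
            (fun j : Fin (n+a+1) => s j.succ) ⟨a + i.1, by have := i.isLt; omega⟩) :=
      funext fun i => congrArg s (Fin.ext (by simp [Fin.succ]; omega))
    rw [hr]
    rfl

lemma mdw_perron (Q : Matrix (Fin 4) (Fin 4) ℝ) (ρ : ℝ) (π : Fin 4 → ℝ)
    (heig : ∀ i, ∑ j, (Q i j) ^ 2 * π j = ρ * π i) :
    ∀ L, ∑ s : Fin (L+1) → Fin 4,
        (∏ t : Fin L, Q (s t.succ) (s t.castSucc) ^ 2) * π (s 0)
      = ρ ^ L * ∑ i, π i := by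
  intro L
  induction L with
  | zero => simp [mdw_sum_cons]
  | succ L ih =>
    rw [mdw_sum_cons]
    have step : ∀ s : Fin (L+1) → Fin 4,
        ∑ x : Fin 4, (∏ t : Fin (L+1),
            Q ((Fin.cons x s : Fin (L+2) → Fin 4) t.succ)
              ((Fin.cons x s : Fin (L+2) → Fin 4) t.castSucc) ^ 2)
            * π ((Fin.cons x s : Fin (L+2) → Fin 4) 0)
        = ρ * ((∏ t : Fin L, Q (s t.succ) (s t.castSucc) ^ 2) * π (s 0)) := by
      intro s
      have : ∀ x : Fin 4, (∏ t : Fin (L+1),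
            Q ((Fin.cons x s : Fin (L+2) → Fin 4) t.succ)
              ((Fin.cons x s : Fin (L+2) → Fin 4) t.castSucc) ^ 2)
            * π ((Fin.cons x s : Fin (L+2) → Fin 4) 0)
          = (Q (s 0) x ^ 2 * π x) * ∏ t : Fin L, Q (s t.succ) (s t.castSucc) ^ 2 := by
        intro x
        simp only [Fin.prod_univ_succ, Fin.cons_zero, Fin.cons_succ, ← Fin.succ_castSucc,
          Fin.castSucc_zero']
        ring
      rw [Finset.sum_congr rfl (fun x _ => this x), ← Finset.sum_mul, heig (s 0)]
      ring
    rw [Finset.sum_congr rfl (fun s _ => step s), ← Finset.mul_sum, ih]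
    ring

lemma mdw_core (Q : Matrix (Fin 4) (Fin 4) ℝ) (hpos : ∀ i j, 0 < Q i j)
    (ρ : ℝ) (hρ : 0 < ρ) (π : Fin 4 → ℝ) (hπ : ∀ i, 0 < π i)
    (heig : ∀ i, ∑ j, (Q i j) ^ 2 * π j = ρ * π i) (L : ℕ) :
    ∑ s : Fin (L+1) → Fin 4, ∏ t : Fin L, Q (s t.succ) (s t.castSucc) ^ 2
      ≤ (⨆ i : Fin 4, (∑ j, π j) / (π i * ρ)) * ρ ^ (L + 1) := by
  obtain ⟨i0, -, hi0⟩ := Finset.exists_min_image Finset.univ π ⟨0, Finset.mem_univ 0⟩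
  have hstep : ∑ s : Fin (L+1) → Fin 4, ∏ t : Fin L, Q (s t.succ) (s t.castSucc) ^ 2
      ≤ (π i0)⁻¹ * ∑ s : Fin (L+1) → Fin 4,
          (∏ t : Fin L, Q (s t.succ) (s t.castSucc) ^ 2) * π (s 0) := by
    rw [Finset.mul_sum]
    refine Finset.sum_le_sum fun s _ => ?_
    have hprod : 0 ≤ ∏ t : Fin L, Q (s t.succ) (s t.castSucc) ^ 2 :=
      Finset.prod_nonneg fun t _ => sq_nonneg _
    have h1 : (1:ℝ) ≤ (π i0)⁻¹ * π (s 0) := by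
      rw [inv_mul_eq_div, le_div_iff₀ (hπ i0), one_mul]
      exact hi0 (s 0) (Finset.mem_univ _)
    calc ∏ t : Fin L, Q (s t.succ) (s t.castSucc) ^ 2
        = (∏ t : Fin L, Q (s t.succ) (s t.castSucc) ^ 2) * 1 := by ring
      _ ≤ (∏ t : Fin L, Q (s t.succ) (s t.castSucc) ^ 2) * ((π i0)⁻¹ * π (s 0)) := by
          exact mul_le_mul_of_nonneg_left h1 hprod
      _ = (π i0)⁻¹ * ((∏ t : Fin L, Q (s t.succ) (s t.castSucc) ^ 2) * π (s 0)) := by ring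
  rw [mdw_perron Q ρ π heig L] at hstep
  have hle : (π i0)⁻¹ * (ρ ^ L * ∑ i, π i) = ((∑ j, π j) / (π i0 * ρ)) * ρ ^ (L+1) := by
    have hρ0 : ρ ≠ 0 := hρ.ne'
    have hπ0 : π i0 ≠ 0 := (hπ i0).ne'
    field_simp
    ring
  rw [hle] at hstep
  refine hstep.trans ?_
  have hsup : ((∑ j, π j) / (π i0 * ρ)) ≤ ⨆ i : Fin 4, (∑ j, π j) / (π i * ρ) :=
    le_ciSup (f := fun i : Fin 4 => (∑ j, π j) / (π i * ρ))
      (Set.Finite.bddAbove (Set.finite_range _)) i0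
  exact mul_le_mul_of_nonneg_right hsup (pow_nonneg hρ.le _)

/-- Extend a tuple by `0` outside its domain, to allow `ℕ`-indexed manipulation. -/
def mdwE {N : ℕ} (s : Fin N → Fin 4) : ℕ → Fin 4 :=
  fun v => if h : v < N then s ⟨v, h⟩ else 0

lemma mdwE_lt {N : ℕ} (s : Fin N → Fin 4) (v : ℕ) (h : v < N) :
    mdwE s v = s ⟨v, h⟩ := dif_pos h

lemma mdwE_snoc_lt {N : ℕ} (s : Fin N → Fin 4) (x : Fin 4) (v : ℕ) (h : v < N) :
    mdwE (Fin.snoc s x : Fin (N+1) → Fin 4) v = mdwE s v := by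
  rw [mdwE_lt _ v (by omega), mdwE_lt _ v h, mdw_snoc_mk]

lemma mdwE_snoc_last {N : ℕ} (s : Fin N → Fin 4) (x : Fin 4) :
    mdwE (Fin.snoc s x : Fin (N+1) → Fin 4) N = x := by
  rw [mdwE_lt _ N (by omega), mdw_snoc_last']

/-- Partially collapsed window sum: first `k'+1` positions of the two windows are
identified by an indicator, and transitions `k'+1 … ℓ-1` of the second window have
already been folded onto the first window as an extra product. -/
def mdwT (Q : Matrix (Fin 4) (Fin 4) ℝ) (p : Fin 4 → ℝ) (c ℓ k' : ℕ) : ℝ :=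
  ∑ s : Fin (c + k' + 1) → Fin 4,
    mdwW Q p (c + k') s *
      ((∏ j ∈ Finset.range (ℓ - (k'+1)), Q (mdwE s (k'+1+j)) (mdwE s (k'+j))) *
        (if ∀ i : Fin (k'+1), mdwE s i.1 = mdwE s (c + i.1) then (1:ℝ) else 0))

lemma mdwT_step (Q : Matrix (Fin 4) (Fin 4) ℝ) (p : Fin 4 → ℝ) (c ℓ k' : ℕ)
    (hk : k' + 2 ≤ ℓ) (hc : ℓ ≤ c) :
    mdwT Q p c ℓ (k'+1) = mdwT Q p c ℓ k' := by
  unfold mdwT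
  show ∑ s : Fin ((c + k' + 1) + 1) → Fin 4,
      mdwW Q p (c + (k'+1)) s *
        ((∏ j ∈ Finset.range (ℓ - (k'+1+1)),
            Q (mdwE s (k'+1+1+j)) (mdwE s (k'+1+j))) *
          (if ∀ i : Fin (k'+1+1), mdwE s i.1 = mdwE s (c + i.1) then (1:ℝ) else 0))
    = _
  rw [mdw_sum_snoc]
  apply Finset.sum_congr rfl
  intro s _
  beta_reduce
  -- rewrite each summand of the inner sum
  have hterm : ∀ x : Fin 4,
      mdwW Q p (c + (k'+1)) (Fin.snoc s x) *
        ((∏ j ∈ Finset.range (ℓ - (k'+1+1)),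
            Q (mdwE (Fin.snoc s x : Fin ((c+k'+1)+1) → Fin 4) (k'+1+1+j))
              (mdwE (Fin.snoc s x : Fin ((c+k'+1)+1) → Fin 4) (k'+1+j))) *
          (if ∀ i : Fin (k'+1+1), mdwE (Fin.snoc s x : Fin ((c+k'+1)+1) → Fin 4) i.1
              = mdwE (Fin.snoc s x : Fin ((c+k'+1)+1) → Fin 4) (c + i.1) then (1:ℝ) else 0))
      = (mdwW Q p (c + k') s * Q x (s (Fin.last (c + k')))) *
        ((∏ j ∈ Finset.range (ℓ - (k'+2)),
            Q (mdwE s (k'+2+j)) (mdwE s (k'+1+j))) *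
          (if ((∀ i : Fin (k'+1), mdwE s i.1 = mdwE s (c + i.1)) ∧ x = s ⟨k'+1, by omega⟩)
            then (1:ℝ) else 0)) := by
    intro x
    have hW : mdwW Q p (c + (k'+1)) (Fin.snoc s x)
        = mdwW Q p (c + k') s * Q x (s (Fin.last (c + k'))) := mdw_W_snoc Q p (c+k') s x
    rw [hW]
    congr 1
    congr 1
    · refine Finset.prod_congr rfl fun j hj => ?_
      rw [Finset.mem_range] at hj
      rw [mdwE_snoc_lt s x _ (by omega), mdwE_snoc_lt s x _ (by omega)]
    · congr 1
      refine propext ?_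
      constructor
      · intro h
        constructor
        · intro i
          have h1 : mdwE (Fin.snoc s x : Fin ((c+k'+1)+1) → Fin 4) i.1
              = mdwE (Fin.snoc s x : Fin ((c+k'+1)+1) → Fin 4) (c + i.1) :=
            h ⟨i.1, by omega⟩
          rwa [mdwE_snoc_lt s x _ (by omega), mdwE_snoc_lt s x _ (by omega)] at h1
        · have h2 := h ⟨k'+1, by omega⟩
          rw [mdwE_snoc_lt s x _ (by omega)] at h2
          rw [show c + (k'+1) = c+k'+1 from rfl, mdwE_snoc_last] at h2
          rw [mdwE_lt s _ (by omega)] at h2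
          exact h2.symm
      · rintro ⟨h1, h2⟩ i
        by_cases hi : i.1 < k' + 1
        · have := h1 ⟨i.1, hi⟩
          rw [mdwE_snoc_lt s x _ (by omega), mdwE_snoc_lt s x _ (by omega)]
          exact this
        · have hi' : i.1 = k' + 1 := by have := i.isLt; omega
          rw [hi', mdwE_snoc_lt s x _ (by omega)]
          rw [show c + (k'+1) = c+k'+1 from rfl, mdwE_snoc_last]
          rw [mdwE_lt s _ (by omega), h2]
  rw [Finset.sum_congr rfl fun x _ => hterm x]
  -- now evaluate the sum over x
  by_cases hC : ∀ i : Fin (k'+1), mdwE s i.1 = mdwE s (c + i.1)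
  · have hx : ∀ x : Fin 4,
        (if ((∀ i : Fin (k'+1), mdwE s i.1 = mdwE s (c + i.1)) ∧ x = s ⟨k'+1, by omega⟩)
          then (1:ℝ) else 0) = if x = s ⟨k'+1, by omega⟩ then (1:ℝ) else 0 := by
      intro x; by_cases hxx : x = s ⟨k'+1, by omega⟩ <;> simp [hxx, hC]
    simp only [hx]
    rw [Finset.sum_congr rfl (fun x _ =>
      show (mdwW Q p (c + k') s * Q x (s (Fin.last (c + k')))) *
        ((∏ j ∈ Finset.range (ℓ - (k'+2)), Q (mdwE s (k'+2+j)) (mdwE s (k'+1+j))) *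
          (if x = s ⟨k'+1, by omega⟩ then (1:ℝ) else 0))
      = (if x = s ⟨k'+1, by omega⟩ then
          (mdwW Q p (c + k') s * Q x (s (Fin.last (c + k')))) *
            (∏ j ∈ Finset.range (ℓ - (k'+2)), Q (mdwE s (k'+2+j)) (mdwE s (k'+1+j)))
         else 0) from by by_cases hxx : x = s ⟨k'+1, by omega⟩ <;> simp [hxx])]
    rw [Finset.sum_ite_eq' Finset.univ (s ⟨k'+1, by omega⟩)
      (fun x => (mdwW Q p (c + k') s * Q x (s (Fin.last (c + k')))) *
          (∏ j ∈ Finset.range (ℓ - (k'+2)), Q (mdwE s (k'+2+j)) (mdwE s (k'+1+j))))]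
    simp only [Finset.mem_univ, if_true]
    rw [if_pos hC]
    -- combine `Q (s ⟨k'+1⟩) (s last)` with the product
    have hlast : s (Fin.last (c + k')) = mdwE s (c + k') := by
      rw [mdwE_lt s _ (by omega)]; rfl
    have hck : mdwE s (c + k') = mdwE s k' := (hC ⟨k', by omega⟩).symm
    have hq : Q (s ⟨k'+1, by omega⟩) (s (Fin.last (c + k')))
        = Q (mdwE s (k'+1)) (mdwE s k') := by
      rw [hlast, hck, mdwE_lt s (k'+1) (by omega), mdwE_lt s k' (by omega)]
    have hsplit : (∏ j ∈ Finset.range (ℓ - (k'+1)), Q (mdwE s (k'+1+j)) (mdwE s (k'+j)))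
        = (∏ j ∈ Finset.range (ℓ - (k'+2)), Q (mdwE s (k'+2+j)) (mdwE s (k'+1+j)))
          * Q (mdwE s (k'+1)) (mdwE s k') := by
      rw [show ℓ - (k'+1) = (ℓ - (k'+2)) + 1 from by omega, Finset.prod_range_succ']
      congr 1
      refine Finset.prod_congr rfl fun j _ => ?_
      congr 2 <;> omega
    rw [hsplit, hq]
    ring
  · rw [if_neg hC]
    rw [Finset.sum_congr rfl (fun x _ => show _ = (0:ℝ) from by
      rw [if_neg (by rintro ⟨h1, -⟩; exact hC h1)]; ring)]
    simp

lemma mdwT_chain (Q : Matrix (Fin 4) (Fin 4) ℝ) (p : Fin 4 → ℝ) (c ℓ : ℕ) (hc : ℓ ≤ c) :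
    ∀ k', k' + 1 ≤ ℓ → mdwT Q p c ℓ k' = mdwT Q p c ℓ 0 := by
  intro k'
  induction k' with
  | zero => intro _; rfl
  | succ k ih =>
    intro h
    rw [mdwT_step Q p c ℓ k (by omega) hc]
    exact ih (by omega)

lemma mdwT_final (Q : Matrix (Fin 4) (Fin 4) ℝ) (hpos : ∀ i j, 0 < Q i j)
    (hcol : ∀ j, ∑ i, Q i j = 1)
    (p : Fin 4 → ℝ) (hp : ∀ i, 0 ≤ p i) (hpsum : ∑ i, p i = 1)
    (ρ : ℝ) (hρ : 0 < ρ) (π : Fin 4 → ℝ) (hπ : ∀ i, 0 < π i)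
    (heig : ∀ i, ∑ j, (Q i j) ^ 2 * π j = ρ * π i)
    (L c' : ℕ) (hc : L ≤ c') :
    mdwT Q p (c'+1) (L+1) 0
      ≤ (⨆ i : Fin 4, (∑ j, π j) / (π i * ρ)) * ρ ^ (L + 1) := by
  have hQ1 : ∀ i j, Q i j ≤ 1 := by
    intro i j
    have h := hcol j
    have : ∀ i' ∈ (Finset.univ : Finset (Fin 4)), 0 ≤ Q i' j := fun i' _ => (hpos i' j).le
    calc Q i j ≤ ∑ i', Q i' j := Finset.single_le_sum this (Finset.mem_univ i)
      _ = 1 := h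
  have hp1 : ∀ i, p i ≤ 1 := by
    intro i
    calc p i ≤ ∑ i', p i' := Finset.single_le_sum (fun i' _ => hp i') (Finset.mem_univ i)
      _ = 1 := hpsum
  have hWnn : ∀ n (s : Fin (n+1) → Fin 4), 0 ≤ mdwW Q p n s := by
    intro n s
    exact mul_nonneg (hp _) (Finset.prod_nonneg fun t _ => (hpos _ _).le)
  -- Step 1: peel the tied coordinate at position c'+1
  have step1 : mdwT Q p (c'+1) (L+1) 0
      = ∑ s : Fin (c'+1) → Fin 4,
          (mdwW Q p c' s * Q (mdwE s 0) (s (Fin.last c'))) *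
            ∏ j ∈ Finset.range L, Q (mdwE s (1+j)) (mdwE s j) := by
    unfold mdwT
    show ∑ s : Fin ((c'+1)+1) → Fin 4,
        mdwW Q p (c'+1) s *
          ((∏ j ∈ Finset.range L, Q (mdwE s (0+1+j)) (mdwE s (0+j))) *
            (if ∀ i : Fin 1, mdwE s i.1 = mdwE s (c'+1 + i.1) then (1:ℝ) else 0))
      = _
    rw [mdw_sum_snoc]
    apply Finset.sum_congr rfl
    intro s _
    beta_reduce
    have hterm : ∀ x : Fin 4,
        mdwW Q p (c'+1) (Fin.snoc s x) *
          ((∏ j ∈ Finset.range L,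
              Q (mdwE (Fin.snoc s x : Fin ((c'+1)+1) → Fin 4) (0+1+j))
                (mdwE (Fin.snoc s x : Fin ((c'+1)+1) → Fin 4) (0+j))) *
            (if ∀ i : Fin 1, mdwE (Fin.snoc s x : Fin ((c'+1)+1) → Fin 4) i.1
                = mdwE (Fin.snoc s x : Fin ((c'+1)+1) → Fin 4) (c'+1 + i.1) then (1:ℝ) else 0))
        = (mdwW Q p c' s * Q x (s (Fin.last c'))) *
            ((∏ j ∈ Finset.range L, Q (mdwE s (1+j)) (mdwE s j)) *
              (if x = mdwE s 0 then (1:ℝ) else 0)) := by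
      intro x
      rw [mdw_W_snoc Q p c' s x]
      congr 1
      congr 1
      · refine Finset.prod_congr rfl fun j hj => ?_
        rw [Finset.mem_range] at hj
        rw [mdwE_snoc_lt s x _ (by omega), mdwE_snoc_lt s x _ (by omega)]
        congr 2
        omega
      · congr 1
        refine propext ?_
        constructor
        · intro h
          have h1 : mdwE (Fin.snoc s x : Fin ((c'+1)+1) → Fin 4) 0
              = mdwE (Fin.snoc s x : Fin ((c'+1)+1) → Fin 4) (c'+1+0) := h ⟨0, by omega⟩
          rw [mdwE_snoc_lt s x _ (by omega)] at h1
          exact (h1.trans (mdwE_snoc_last s x)).symm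
        · intro hx i
          have hi : i.1 = 0 := by have := i.isLt; omega
          rw [hi, mdwE_snoc_lt s x _ (by omega)]
          exact (hx.symm ▸ (mdwE_snoc_last s x).symm : mdwE s 0
            = mdwE (Fin.snoc s x : Fin ((c'+1)+1) → Fin 4) (c'+1+0))
    rw [Finset.sum_congr rfl fun x _ => hterm x]
    rw [Finset.sum_congr rfl (fun x _ =>
      show (mdwW Q p c' s * Q x (s (Fin.last c'))) *
          ((∏ j ∈ Finset.range L, Q (mdwE s (1+j)) (mdwE s j)) *
            (if x = mdwE s 0 then (1:ℝ) else 0))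
        = (if x = mdwE s 0 then
            (mdwW Q p c' s * Q x (s (Fin.last c'))) *
              (∏ j ∈ Finset.range L, Q (mdwE s (1+j)) (mdwE s j))
          else 0) from by by_cases hxx : x = mdwE s 0 <;> simp [hxx])]
    rw [Finset.sum_ite_eq' Finset.univ (mdwE s 0)
      (fun x => (mdwW Q p c' s * Q x (s (Fin.last c'))) *
          (∏ j ∈ Finset.range L, Q (mdwE s (1+j)) (mdwE s j)))]
    simp only [Finset.mem_univ, if_true]
  rw [step1]
  -- Step 2: bound the linking factor by 1
  have step2 : ∑ s : Fin (c'+1) → Fin 4,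
        (mdwW Q p c' s * Q (mdwE s 0) (s (Fin.last c'))) *
          ∏ j ∈ Finset.range L, Q (mdwE s (1+j)) (mdwE s j)
      ≤ ∑ s : Fin (c'+1) → Fin 4,
          mdwW Q p c' s * ∏ j ∈ Finset.range L, Q (mdwE s (1+j)) (mdwE s j) := by
    refine Finset.sum_le_sum fun s _ => ?_
    have hprod : 0 ≤ ∏ j ∈ Finset.range L, Q (mdwE s (1+j)) (mdwE s j) :=
      Finset.prod_nonneg fun j _ => (hpos _ _).le
    have : mdwW Q p c' s * Q (mdwE s 0) (s (Fin.last c')) ≤ mdwW Q p c' s * 1 :=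
      mul_le_mul_of_nonneg_left (hQ1 _ _) (hWnn c' s)
    rw [mul_one] at this
    exact mul_le_mul_of_nonneg_right this hprod
  refine (step2.trans ?_)
  -- Step 3: marginalize the middle coordinates
  have hres : ∀ s : Fin (c'+1) → Fin 4,
      (∏ j ∈ Finset.range L,
        Q (mdwE (fun i : Fin (L+1) => s (Fin.castLE (Nat.succ_le_succ hc) i)) (1+j))
          (mdwE (fun i : Fin (L+1) => s (Fin.castLE (Nat.succ_le_succ hc) i)) j))
      = ∏ j ∈ Finset.range L, Q (mdwE s (1+j)) (mdwE s j) := by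
    intro s
    refine Finset.prod_congr rfl fun j hj => ?_
    rw [Finset.mem_range] at hj
    have e : ∀ (v : ℕ) (hv : v < L+1),
        mdwE (fun i : Fin (L+1) => s (Fin.castLE (Nat.succ_le_succ hc) i)) v = mdwE s v := by
      intro v hv
      rw [mdwE_lt _ v hv, mdwE_lt s v (by omega)]
      exact congrArg s (Fin.ext rfl)
    rw [e (1+j) (by omega), e j (by omega)]
  have step3 : ∑ s : Fin (c'+1) → Fin 4,
        mdwW Q p c' s * ∏ j ∈ Finset.range L, Q (mdwE s (1+j)) (mdwE s j)
      = ∑ s : Fin (L+1) → Fin 4,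
          mdwW Q p L s * ∏ j ∈ Finset.range L, Q (mdwE s (1+j)) (mdwE s j) := by
    refine Eq.trans ?_ (mdw_dropTail Q hcol p L
      (fun s'' : Fin (L+1) → Fin 4 => ∏ j ∈ Finset.range L, Q (mdwE s'' (1+j)) (mdwE s'' j))
      c' hc)
    refine Finset.sum_congr rfl fun s _ => ?_
    rw [← hres s]
  rw [step3]
  -- Step 4: identify the two products and finish with the Perron bound
  have step4 : ∀ s : Fin (L+1) → Fin 4,
      ∏ j ∈ Finset.range L, Q (mdwE s (1+j)) (mdwE s j)
        = ∏ t : Fin L, Q (s t.succ) (s t.castSucc) := by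
    intro s
    rw [← Fin.prod_univ_eq_prod_range (fun j => Q (mdwE s (1+j)) (mdwE s j)) L]
    refine Finset.prod_congr rfl fun t _ => ?_
    have e1 : mdwE s (1+t.1) = s t.succ := by
      rw [mdwE_lt s _ (by have := t.isLt; omega)]
      exact congrArg s (Fin.ext (by simp [Fin.succ]; omega))
    have e2 : mdwE s t.1 = s t.castSucc := by
      rw [mdwE_lt s _ (by have := t.isLt; omega)]
      exact congrArg s (Fin.ext rfl)
    rw [e1, e2]
  have step5 : ∑ s : Fin (L+1) → Fin 4,
        mdwW Q p L s * ∏ j ∈ Finset.range L, Q (mdwE s (1+j)) (mdwE s j)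
      ≤ ∑ s : Fin (L+1) → Fin 4, ∏ t : Fin L, Q (s t.succ) (s t.castSucc) ^ 2 := by
    refine Finset.sum_le_sum fun s _ => ?_
    rw [step4 s, mdwW]
    have hqn : 0 ≤ ∏ t : Fin L, Q (s t.succ) (s t.castSucc) :=
      Finset.prod_nonneg fun t _ => (hpos _ _).le
    calc (p (s 0) * ∏ t : Fin L, Q (s t.succ) (s t.castSucc)) *
          ∏ t : Fin L, Q (s t.succ) (s t.castSucc)
        ≤ (1 * ∏ t : Fin L, Q (s t.succ) (s t.castSucc)) *
          ∏ t : Fin L, Q (s t.succ) (s t.castSucc) := by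
          refine mul_le_mul_of_nonneg_right (mul_le_mul_of_nonneg_right (hp1 _) hqn) hqn
      _ = ∏ t : Fin L, Q (s t.succ) (s t.castSucc) ^ 2 := by
          rw [one_mul, ← Finset.prod_mul_distrib]
          exact Finset.prod_congr rfl fun t _ => (sq (Q (s t.succ) (s t.castSucc))).symm
  exact step5.trans (mdw_core Q hpos ρ hρ π hπ heig L)

lemma mdw_dropHead' (Q : Matrix (Fin 4) (Fin 4) ℝ)
    (p : Fin 4 → ℝ) (hstat : ∀ i, ∑ j, Q i j * p j = p i) (n a m : ℕ) (hm : m = n + a)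
    (f : (Fin (n+1) → Fin 4) → ℝ) :
    ∑ s : Fin (m+1) → Fin 4,
        mdwW Q p m s * f (fun i : Fin (n+1) => s ⟨a + i.1, by have := i.isLt; omega⟩)
      = ∑ s : Fin (n+1) → Fin 4, mdwW Q p n s * f s := by
  subst hm
  exact mdw_dropHead Q p hstat n f a

lemma mdw_total (Q : Matrix (Fin 4) (Fin 4) ℝ) (hcol : ∀ j, ∑ i, Q i j = 1)
    (p : Fin 4 → ℝ) (hpsum : ∑ i, p i = 1) (n : ℕ) :
    ∑ s : Fin (n+1) → Fin 4, mdwW Q p n s = 1 := by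
  have h := mdw_dropTail Q hcol p 0 (fun _ => (1:ℝ)) n (Nat.zero_le n)
  simp only [mul_one] at h
  rw [h, mdw_sum_cons]
  simp [mdwW, hpsum]

lemma mdw_gamma_ge_one (Q : Matrix (Fin 4) (Fin 4) ℝ) (hpos : ∀ i j, 0 < Q i j)
    (hcol : ∀ j, ∑ i, Q i j = 1)
    (ρ : ℝ) (hρ : 0 < ρ) (π : Fin 4 → ℝ) (hπ : ∀ i, 0 < π i)
    (heig : ∀ i, ∑ j, (Q i j) ^ 2 * π j = ρ * π i) :
    1 ≤ ⨆ i : Fin 4, (∑ j, π j) / (π i * ρ) := by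
  have hQ1 : ∀ i j, Q i j ≤ 1 := by
    intro i j
    calc Q i j ≤ ∑ i', Q i' j :=
          Finset.single_le_sum (fun i' _ => (hpos i' j).le) (Finset.mem_univ i)
      _ = 1 := hcol j
  have h : ρ * π 0 ≤ ∑ j, π j := by
    rw [← heig 0]
    refine Finset.sum_le_sum fun j _ => ?_
    have h2 : Q 0 j ^ 2 ≤ 1 := by nlinarith [hpos 0 j, hQ1 0 j]
    nlinarith [hπ j]
  have h1 : (1:ℝ) ≤ (∑ j, π j) / (π 0 * ρ) := by
    rw [le_div_iff₀ (mul_pos (hπ 0) hρ), one_mul, mul_comm]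
    exact h
  exact h1.trans (le_ciSup (f := fun i : Fin 4 => (∑ j, π j) / (π i * ρ))
    (Set.Finite.bddAbove (Set.finite_range _)) 0)


/-- For a stationary Markov chain with positive transition matrix `Q`,
two physically disjoint length-`ℓ` windows `X` (starting at `a`) and `Y` (starting at
`b ≥ a + ℓ`) satisfy `P(X = Y) ≤ γ ρ^ℓ`, where `ρ` is the Perron eigenvalue of
`Q̄ = (q_{ij}²)` and `γ = max_i ‖π‖₁/(π_i ρ)` for its positive eigenvector `π`. -/
theorem markov_disjoint_windows_equal_bound (Q : Matrix (Fin 4) (Fin 4) ℝ)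
    (hpos : ∀ i j, 0 < Q i j) (hcol : ∀ j, ∑ i, Q i j = 1)
    (p : Fin 4 → ℝ) (hp : ∀ i, 0 ≤ p i) (hpsum : ∑ i, p i = 1)
    (hstat : ∀ i, ∑ j, Q i j * p j = p i)
    (ρ : ℝ) (hρ : 0 < ρ) (π : Fin 4 → ℝ) (hπ : ∀ i, 0 < π i)
    (heig : ∀ i, ∑ j, (Q i j) ^ 2 * π j = ρ * π i)
    (m ℓ a b : ℕ) (hab : a + ℓ ≤ b) (hbm : b + ℓ ≤ m + 1) :
    ∑ s : Fin (m + 1) → Fin 4,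
        (p (s 0) * ∏ t : Fin m, Q (s t.succ) (s t.castSucc)) *
          (if ∀ i : Fin ℓ,
              s ⟨a + i.1, by have := i.isLt; omega⟩
                = s ⟨b + i.1, by have := i.isLt; omega⟩
           then (1 : ℝ) else 0)
      ≤ (⨆ i : Fin 4, (∑ j, π j) / (π i * ρ)) * ρ ^ ℓ := by
  rcases Nat.eq_zero_or_pos ℓ with hℓ0 | hℓpos
  · subst hℓ0
    have hLHS : ∑ s : Fin (m + 1) → Fin 4,
        (p (s 0) * ∏ t : Fin m, Q (s t.succ) (s t.castSucc)) *
          (if ∀ i : Fin 0,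
              s ⟨a + i.1, by have := i.isLt; omega⟩
                = s ⟨b + i.1, by have := i.isLt; omega⟩
           then (1 : ℝ) else 0) = 1 := by
      rw [Finset.sum_congr rfl (fun s _ => by
        rw [if_pos (fun i : Fin 0 => i.elim0), mul_one])]
      exact mdw_total Q hcol p hpsum m
    rw [hLHS, pow_zero, mul_one]
    exact mdw_gamma_ge_one Q hpos hcol ρ hρ π hπ heig
  · obtain ⟨L, rfl⟩ : ∃ L, ℓ = L + 1 := ⟨ℓ - 1, by omega⟩
    have hkm : b + L ≤ m := by omega
    set γ := ⨆ i : Fin 4, (∑ j, π j) / (π i * ρ) with hγ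
    -- the indicator as a function of the first b+L+1 coordinates
    set f : (Fin (b + L + 1) → Fin 4) → ℝ := fun u =>
      if ∀ i : Fin (L+1),
          u ⟨a + i.1, by have := i.isLt; omega⟩ = u ⟨b + i.1, by have := i.isLt; omega⟩
      then (1:ℝ) else 0 with hf
    have stepA : ∑ s : Fin (m + 1) → Fin 4,
        (p (s 0) * ∏ t : Fin m, Q (s t.succ) (s t.castSucc)) *
          (if ∀ i : Fin (L+1),
              s ⟨a + i.1, by have := i.isLt; omega⟩
                = s ⟨b + i.1, by have := i.isLt; omega⟩
           then (1 : ℝ) else 0)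
        = ∑ s : Fin (b + L + 1) → Fin 4, mdwW Q p (b + L) s * f s := by
      refine Eq.trans ?_ (mdw_dropTail Q hcol p (b + L) f m hkm)
      exact Finset.sum_congr rfl fun s _ => rfl
    rw [stepA]
    -- shift out the first a coordinates
    set f' : (Fin ((b-a) + L + 1) → Fin 4) → ℝ := fun u =>
      if ∀ i : Fin (L+1),
          u ⟨i.1, by have := i.isLt; omega⟩ = u ⟨(b-a) + i.1, by have := i.isLt; omega⟩
      then (1:ℝ) else 0 with hf'
    have stepB : ∑ s : Fin (b + L + 1) → Fin 4, mdwW Q p (b + L) s * f s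
        = ∑ s : Fin ((b-a) + L + 1) → Fin 4, mdwW Q p ((b-a) + L) s * f' s := by
      refine Eq.trans ?_ (mdw_dropHead' Q p hstat ((b-a) + L) a (b + L) (by omega) f')
      refine Finset.sum_congr rfl fun s _ => ?_
      congr 1
      rw [hf, hf']
      refine if_congr ?_ rfl rfl
      refine forall_congr' fun i => ?_
      constructor
      · intro h
        refine Eq.trans (Eq.trans ?_ h) ?_
        · exact congrArg s (Fin.ext rfl)
        · exact congrArg s (Fin.ext (by simp; omega))
      · intro h
        refine Eq.trans (Eq.trans ?_ h) ?_
        · exact congrArg s (Fin.ext rfl)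
        · exact congrArg s (Fin.ext (by simp; omega))
    rw [stepB]
    -- identify with the collapsed-window sum
    have stepC : ∑ s : Fin ((b-a) + L + 1) → Fin 4, mdwW Q p ((b-a) + L) s * f' s
        = mdwT Q p (b-a) (L+1) L := by
      unfold mdwT
      refine Finset.sum_congr rfl fun s _ => ?_
      congr 1
      rw [Nat.sub_self, Finset.range_zero, Finset.prod_empty, one_mul, hf']
      refine if_congr ?_ rfl rfl
      refine forall_congr' fun i => ?_
      rw [mdwE_lt s i.1 (by have := i.isLt; omega),
        mdwE_lt s ((b-a) + i.1) (by have := i.isLt; omega)]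
    rw [stepC]
    -- collapse the window and apply the Perron bound
    have hc : L + 1 ≤ b - a := by omega
    rw [mdwT_chain Q p (b-a) (L+1) hc L (by omega)]
    obtain ⟨c', hc'⟩ : ∃ c', b - a = c' + 1 := ⟨b - a - 1, by omega⟩
    rw [hc']
    exact mdwT_final Q hpos hcol p hp hpsum ρ hρ π hπ heig L c' (by omega)
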